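/- arXiv:math/0504251 — 3 statements merged into one kernel-verified Lean document; each statement's English description precedes it below -/
import Mathlib

section
/- Let g ≥ 1 and let F be the free group on the 2g generators a₁, b₁, …, a_g, b_g. Set w = [a₁,b₁]·[a₂,b₂]⋯[a_g,b_g], the product of the commutators [aᵢ,bᵢ] = aᵢbᵢaᵢ⁻¹bᵢ⁻¹. Then the cyclic subgroup ⟨w⟩ generated by w is root-closed in F: for every s ∈ F and every integer k ≥ 1 with s^k ∈ ⟨w⟩, already s ∈ ⟨w⟩. -/
set_option linter.unusedSectionVars false
set_option maxHeartbeats 1000000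

open scoped commutatorElement

namespace SRRC

open FreeGroup List

variable {α : Type*} [DecidableEq α]

def Cancels (a b : α × Bool) : Prop := a.1 = b.1 ∧ a.2 = !b.2

def Red' (L : List (α × Bool)) : Prop := L.Chain' fun a b => ¬ Cancels a b

def Junct (L₁ L₂ : List (α × Bool)) : Prop :=
  ∀ a ∈ L₁.getLast?, ∀ b ∈ L₂.head?, ¬ Cancels a b

/-- Instance-stable count of a letter. -/
def cnt (x₀ : α × Bool) (L : List (α × Bool)) : ℕ := L.count x₀

lemma red'_reduce (L : List (α × Bool)) : Red' (reduce L) := by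
  induction L with
  | nil => exact List.isChain_nil
  | cons x L ih =>
    rw [reduce.cons]
    rcases h : reduce L with _ | ⟨hd, tl⟩
    · exact List.isChain_singleton x
    · rw [h] at ih
      by_cases hc : x.1 = hd.1 ∧ x.2 = !hd.2
      · simp only [hc, and_self, if_true]
        exact ih.tail
      · simp only [hc, if_false]
        exact List.isChain_cons_cons.2 ⟨hc, ih⟩

lemma reduce_eq_self (L : List (α × Bool)) (h : Red' L) : reduce L = L := by
  induction L with
  | nil => rfl
  | cons x L ih =>
    rw [reduce.cons, ih (List.isChain_cons.1 h).2]
    cases L with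
    | nil => rfl
    | cons hd tl =>
      have : ¬ Cancels x hd := (List.isChain_cons_cons.1 h).1
      simp only [Cancels] at this
      simp [this]

lemma toWord_red' (x : FreeGroup α) : Red' x.toWord := by
  rw [← reduce_toWord]; exact red'_reduce _

lemma toWord_mk_eq (L : List (α × Bool)) (h : Red' L) : (mk L).toWord = L := by
  rw [toWord_mk, reduce_eq_self _ h]

lemma head?_invRev (L : List (α × Bool)) :
    (invRev L).head? = L.getLast?.map fun a => (a.1, !a.2) := by
  rw [invRev, head?_reverse, getLast?_map]

lemma getLast?_invRev (L : List (α × Bool)) :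
    (invRev L).getLast? = L.head?.map fun a => (a.1, !a.2) := by
  rw [invRev, getLast?_reverse, head?_map]

lemma red'_invRev {L : List (α × Bool)} (h : Red' L) : Red' (invRev L) := by
  have : reduce (invRev L) = invRev L := by
    rw [reduce_invRev, reduce_eq_self _ h]
  rw [show Red' (invRev L) = Red' (reduce (invRev L)) from by rw [this]]
  exact red'_reduce _

lemma red'_flatten : ∀ (Ls : List (List (α × Bool))), (∀ l ∈ Ls, l ≠ []) →
    (∀ l ∈ Ls, Red' l) → Ls.Chain' Junct →
    Red' Ls.flatten ∧ Ls.flatten.head? = (Ls.head?.elim none head?)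
      ∧ Ls.flatten.getLast? = (Ls.getLast?.elim none getLast?) := by
  intro Ls
  induction Ls with
  | nil => intro _ _ _; exact ⟨List.isChain_nil, rfl, rfl⟩
  | cons l Ls ih =>
    intro hne hred hch
    have hl : l ≠ [] := hne l (mem_cons_self)
    obtain ⟨ih1, ih2, ih3⟩ := ih (fun x hx => hne x (mem_cons_of_mem _ hx))
      (fun x hx => hred x (mem_cons_of_mem _ hx)) hch.tail
    have hflat : (l :: Ls).flatten = l ++ Ls.flatten := rfl
    refine ⟨?_, ?_, ?_⟩
    · rw [hflat]
      refine List.isChain_append.2 ⟨hred l (mem_cons_self), ih1, ?_⟩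
      intro a ha b hb
      rw [ih2] at hb
      cases Ls with
      | nil => simp at hb
      | cons l₂ Ls' =>
        exact (List.isChain_cons_cons.1 hch).1 a ha b hb
    · rw [hflat, head?_append_of_ne_nil _ hl]; rfl
    · rw [hflat]
      cases Ls with
      | nil => simp
      | cons l₂ Ls' =>
        have h2 : (l₂ :: Ls').flatten ≠ [] := by
          have : l₂ ≠ [] := hne l₂ (by simp)
          simp only [flatten_cons]
          intro hcon
          exact this (append_eq_nil_iff.1 hcon).1
        rw [getLast?_append_of_ne_nil _ h2, ih3]
        rfl

lemma invRev_cons (y : α × Bool) (L : List (α × Bool)) :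
    invRev (y :: L) = invRev L ++ [(y.1, !y.2)] := by
  simp [invRev]

lemma decomp : ∀ (n : ℕ) (S : List (α × Bool)), S.length ≤ n → Red' S →
    ∃ U T, S = U ++ T ++ invRev U ∧ Red' T ∧ Junct T T ∧ Junct U T ∧
      (∀ a ∈ T.getLast?, ∀ b ∈ U.getLast?, a ≠ b) := by
  intro n
  induction n with
  | zero =>
    intro S hlen _
    have : S = [] := List.length_eq_zero_iff.1 (Nat.le_zero.1 hlen)
    subst this
    exact ⟨[], [], by simp [invRev], List.isChain_nil,
      by intro a ha; simp at ha, by intro a ha; simp at ha,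
      by intro a ha; simp at ha⟩
  | succ n ih =>
    intro S hlen hS
    by_cases hC : Junct S S
    · refine ⟨[], S, by simp [invRev], hS, hC, ?_, ?_⟩
      · intro a ha; simp at ha
      · intro a _ b hb; simp at hb
    · simp only [Junct, not_forall, not_not] at hC
      obtain ⟨a, ha, b, hb, hab⟩ := hC
      rcases S with _ | ⟨x, S'⟩
      · simp at ha
      have hbx : b = x := (by simpa using hb : x = b).symm
      subst hbx
      rcases S' with _ | ⟨y, S''⟩
      · -- singleton
        have hax : a = b := (by simpa using ha : b = a).symm
        subst hax
        exact absurd hab.2 (by simp)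
      set S' := y :: S'' with hS'def
      have hS' : S' ≠ [] := by simp [hS'def]
      set lst := S'.getLast hS' with hlstdef
      set M := S'.dropLast with hMdef
      have hS'eq : S' = M ++ [lst] := (dropLast_append_getLast hS').symm
      have halst : a = lst := by
        have : (b :: S').getLast? = some lst := by
          rw [List.getLast?_eq_getLast (by simp), List.getLast_cons hS']
        rw [this] at ha
        exact (by simpa using ha : lst = a).symm
      subst halst
      have hlst_eq : lst = (b.1, !b.2) := by
        obtain ⟨h1, h2⟩ := hab
        exact Prod.ext h1 h2
      have hchS' : Red' S' := (List.isChain_cons.1 hS).2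
      have hM : Red' M := by
        apply hS.infix
        exact ⟨[b], [lst], by simp [hS'eq]⟩
      have hMlen : M.length ≤ n := by
        have h1 : S'.length = M.length + 1 := by rw [hS'eq]; simp
        have h2 : (b :: S').length = S'.length + 1 := rfl
        omega
      obtain ⟨U', T, hMeq, hTred, hTT, hUT, hTU⟩ := ih M hMlen hM
      refine ⟨b :: U', T, ?_, hTred, hTT, ?_, ?_⟩
      · rw [invRev_cons, ← hlst_eq]
        calc b :: S' = b :: (M ++ [lst]) := by rw [← hS'eq]
          _ = (b :: U') ++ T ++ (invRev U' ++ [lst]) := by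
              rw [hMeq]; simp [List.append_assoc]
      · -- Junct (b :: U') T
        intro p hp q hq
        rcases U' with _ | ⟨u, U''⟩
        · have hpb : p = b := (by simpa using hp : b = p).symm
          subst hpb
          have hMT : M = T := by simpa [invRev] using hMeq
          have hTne : T ≠ [] := by
            intro hT; rw [hT] at hq; simp at hq
          have : q ∈ S'.head? := by
            rw [hS'eq, hMT, head?_append_of_ne_nil _ hTne]
            exact hq
          exact (List.isChain_cons.1 hS).1 q this
        · have : p ∈ (u :: U'').getLast? := by
            rwa [show ((b :: u :: U'').getLast? = (u :: U'').getLast?) from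
              List.getLast?_cons_cons .., ] at hp
          exact hUT p this q hq
      · -- last T ≠ last (b :: U')
        intro p hp q hq
        rcases U' with _ | ⟨u, U''⟩
        · have hqb : q = b := (by simpa using hq : b = q).symm
          subst hqb
          have hMT : M = T := by simpa [invRev] using hMeq
          have hjunct : ∀ p' ∈ M.getLast?, ∀ q' ∈ [lst].head?, ¬ Cancels p' q' :=
            (List.isChain_append.1 (by rwa [← hS'eq] : Chain' _ (M ++ [lst]))).2.2
          intro hpq
          subst hpq
          refine hjunct p (by rwa [hMT]) lst (by simp) ?_
          rw [hlst_eq]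
          exact ⟨rfl, by simp⟩
        · have : q ∈ (u :: U'').getLast? := by
            rwa [List.getLast?_cons_cons] at hq
          exact hTU p hp q this

lemma chain'_junct_replicate (k : ℕ) (T : List (α × Bool)) (h : Junct T T) :
    Chain' Junct (replicate k T) := by
  induction k with
  | zero => exact List.isChain_nil
  | succ k ih =>
    cases k with
    | zero => exact List.isChain_singleton T
    | succ m => exact List.isChain_cons_cons.2 ⟨h, ih⟩

lemma flat_pow {k : ℕ} (hk : 1 ≤ k) {T : List (α × Bool)} (hT : T ≠ [])
    (hred : Red' T) (hTT : Junct T T) :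
    Red' (replicate k T).flatten ∧ (replicate k T).flatten.head? = T.head?
      ∧ (replicate k T).flatten.getLast? = T.getLast? := by
  have h1 : ∀ l ∈ replicate k T, l ≠ [] := fun l hl => (eq_of_mem_replicate hl) ▸ hT
  have h2 : ∀ l ∈ replicate k T, Red' l := fun l hl => (eq_of_mem_replicate hl) ▸ hred
  obtain ⟨r1, r2, r3⟩ := red'_flatten (replicate k T) h1 h2 (chain'_junct_replicate k T hTT)
  obtain ⟨m, rfl⟩ := Nat.exists_eq_add_of_le hk
  refine ⟨r1, ?_, ?_⟩
  · rw [r2, show replicate (1+m) T = T :: replicate m T from by rw [Nat.add_comm]; rfl]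
    rfl
  · rw [r3]
    have : (replicate (1+m) T).getLast? = some T := by
      have hne : replicate (1+m) T ≠ [] := by simp
      rw [List.getLast?_eq_getLast hne]
      exact congrArg some (eq_of_mem_replicate (List.getLast_mem hne))
    rw [this]; rfl

lemma mk_flatten_replicate (k : ℕ) (T : List (α × Bool)) :
    mk (replicate k T).flatten = (mk T) ^ k := by
  induction k with
  | zero => rw [pow_zero]; rfl
  | succ k ih =>
    rw [show replicate (k+1) T = T :: replicate k T from rfl, flatten_cons, ← mul_mk, ih,
      pow_succ']

lemma count_flatten_replicate (x : α × Bool) (k : ℕ) (T : List (α × Bool)) :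
    cnt x (replicate k T).flatten = k * cnt x T := by
  simp only [cnt]
  rw [count_flatten, map_replicate, sum_replicate, smul_eq_mul]

lemma length_flatten_replicate (k : ℕ) (T : List (α × Bool)) :
    ((replicate k T).flatten).length = k * T.length := by
  rw [length_flatten, map_replicate, sum_replicate, smul_eq_mul]

lemma main_lemma {W : List (α × Bool)} (hWred : Red' W) (hWW : Junct W W)
    {x₀ : α × Bool} (hcount : cnt x₀ W = 1)
    (s : FreeGroup α) (k m : ℕ) (hk : 1 ≤ k) (h : s ^ k = (mk W) ^ m) :
    ∃ c : ℕ, s = (mk W) ^ c := by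
  obtain ⟨U, T, hSeq, hTred, hTT, hUT, hTU⟩ :=
    decomp (s.toWord).length s.toWord le_rfl (toWord_red' s)
  have hS : mk s.toWord = s := mk_toWord
  have hSred : Red' (U ++ T ++ invRev U) := hSeq ▸ toWord_red' s
  have hWne : W ≠ [] := by
    intro hW; rw [hW] at hcount; simp [cnt] at hcount
  have hA := List.isChain_append.1 hSred
  have hB := List.isChain_append.1 hA.1
  by_cases hTne : T = []
  · -- then U = [] and s = 1
    subst hTne
    have hU : U = [] := by
      by_contra hUne
      have hj := hA.2.2
      have hlast : U.getLast? = some (U.getLast hUne) := List.getLast?_eq_getLast hUne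
      set a := U.getLast hUne with hadef
      refine hj a (by simp [hlast]) (a.1, !a.2) ?_ ⟨rfl, by simp⟩
      rw [head?_invRev, hlast]
      simp
    refine ⟨0, ?_⟩
    rw [pow_zero, ← hS, hSeq, hU]
    simp [invRev, one_eq_mk]
  · -- main case
    obtain ⟨hTflred, hTflhead, hTfllast⟩ := flat_pow hk hTne hTred hTT
    have hTflne : (replicate k T).flatten ≠ [] := by
      intro hc
      rw [hc, List.getLast?_eq_getLast hTne] at hTfllast
      simp at hTfllast
    have hsdecomp : s = mk U * mk T * (mk U)⁻¹ := by
      rw [← hS, hSeq, inv_mk, mul_mk, mul_mk]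
    have hspow : s ^ k = mk (U ++ (replicate k T).flatten ++ invRev U) := by
      rw [hsdecomp, ← MulAut.conj_apply, ← map_pow, MulAut.conj_apply,
        ← mk_flatten_replicate, inv_mk, mul_mk, mul_mk]
    have hredUTU : Red' (U ++ (replicate k T).flatten ++ invRev U) := by
      refine List.isChain_append.2 ⟨List.isChain_append.2 ⟨hB.1, hTflred, ?_⟩, hA.2.1, ?_⟩
      · intro a ha b hb
        rw [hTflhead] at hb
        exact hUT a ha b hb
      · intro a ha b hb
        rw [getLast?_append_of_ne_nil _ hTflne, hTfllast] at ha
        rw [head?_invRev] at hb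
        rcases hu : U.getLast? with _ | u
        · rw [hu] at hb; simp at hb
        rw [hu] at hb
        have hbu : b = (u.1, !u.2) := by simpa using (by simpa using hb : (u.1,!u.2) = b).symm
        subst hbu
        rintro ⟨h1, h2⟩
        simp only [Bool.not_not] at h2
        exact hTU a ha u (by simp [hu]) (Prod.ext h1 h2)
    have hm : 1 ≤ m := by
      rcases Nat.eq_zero_or_pos m with hm0 | hm1
      · exfalso
        rw [hm0, pow_zero] at h
        have h1 := toWord_mk_eq _ hredUTU
        rw [← hspow, h, toWord_one] at h1
        exact hTflne (append_eq_nil_iff.1 (append_eq_nil_iff.1 h1.symm).1).2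
      · exact hm1
    obtain ⟨hWflred, hWflhead, hWfllast⟩ := flat_pow hm hWne hWred hWW
    have hWpow : (mk W) ^ m = mk (replicate m W).flatten := (mk_flatten_replicate m W).symm
    have hkey : U ++ (replicate k T).flatten ++ invRev U = (replicate m W).flatten := by
      have h1 := toWord_mk_eq _ hredUTU
      have h2 := toWord_mk_eq _ hWflred
      rw [← hspow] at h1
      rw [← hWpow, ← h] at h2
      rw [← h1, ← h2]
    have hU : U = [] := by
      by_contra hUne
      have hinvne : invRev U ≠ [] := by
        intro hc
        have := congrArg List.length hc
        rw [invRev_length] at this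
        exact hUne (List.length_eq_zero_iff.1 this)
      have hUhead : U.head? = some (U.head hUne) := List.head?_eq_head hUne
      set u := U.head hUne with hudef
      have hhead : ((replicate m W).flatten).head? = some u := by
        rw [← hkey, head?_append_of_ne_nil _ (by intro hc; exact hUne (append_eq_nil_iff.1 hc).1),
          head?_append_of_ne_nil _ hUne, hUhead]
      have hlast : ((replicate m W).flatten).getLast? = some (u.1, !u.2) := by
        rw [← hkey, getLast?_append_of_ne_nil _ hinvne, getLast?_invRev, hUhead]
        rfl
      rw [hWflhead] at hhead
      rw [hWfllast] at hlast
      exact hWW _ hlast u hhead ⟨rfl, by simp⟩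
    rw [hU] at hkey
    simp only [invRev, List.map_nil, List.reverse_nil, List.nil_append, List.append_nil] at hkey
    set c := cnt x₀ T with hcdef
    have hcnt : k * c = m := by
      have h1 := congrArg (cnt x₀) hkey
      rw [count_flatten_replicate, count_flatten_replicate, hcount, Nat.mul_one] at h1
      exact h1
    have hlen : T.length = c * W.length := by
      have h1 := congrArg List.length hkey
      rw [length_flatten_replicate, length_flatten_replicate, ← hcnt, Nat.mul_assoc] at h1
      exact Nat.eq_of_mul_eq_mul_left (by omega) h1
    have hTpre : T <+: (replicate k T).flatten := by
      have hrep : replicate k T = T :: replicate (k-1) T := by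
        cases k with
        | zero => omega
        | succ n => rfl
      rw [hrep, flatten_cons]
      exact List.prefix_append _ _
    have hWcpre : (replicate c W).flatten <+: (replicate m W).flatten := by
      have hrep : replicate m W = replicate c W ++ replicate (m - c) W := by
        rw [← List.replicate_add]
        congr 1
        have : c ≤ m := by
          rw [← hcnt]
          exact Nat.le_mul_of_pos_left c (by omega)
        omega
      rw [hrep, flatten_append]
      exact List.prefix_append _ _
    have hlen2 : T.length = ((replicate c W).flatten).length := by
      rw [length_flatten_replicate, hlen]
    have hTeq : T = (replicate c W).flatten := by
      rcases List.prefix_or_prefix_of_prefix (hkey ▸ hTpre) hWcpre with hp | hp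
      · exact hp.eq_of_length hlen2
      · exact (hp.eq_of_length hlen2.symm).symm
    refine ⟨c, ?_⟩
    have hsT : s = mk T := by
      rw [← hS, hSeq, hU]
      simp [invRev]
    rw [hsT, hTeq, mk_flatten_replicate]

def Cword (g : ℕ) (i : Fin g) : List ((Fin g × Bool) × Bool) :=
  [((i, false), true), ((i, true), true), ((i, false), false), ((i, true), false)]

def Wword (g : ℕ) : List ((Fin g × Bool) × Bool) := (List.ofFn (Cword g)).flatten

lemma prod_map_mk (Ls : List (List (α × Bool))) : (Ls.map mk).prod = mk Ls.flatten := by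
  induction Ls with
  | nil => rw [map_nil, prod_nil, flatten_nil, one_eq_mk]
  | cons l Ls ih => rw [map_cons, prod_cons, ih, flatten_cons, mul_mk]

lemma comm_mk (a b : α) : ⁅(of a : FreeGroup α), of b⁆ =
    mk [(a, true), (b, true), (a, false), (b, false)] := by
  rw [commutatorElement_def]
  have h1 : (of a : FreeGroup α) = mk [(a, true)] := rfl
  have h2 : (of b : FreeGroup α) = mk [(b, true)] := rfl
  rw [h1, h2, inv_mk, inv_mk, mul_mk, mul_mk, mul_mk]
  simp [invRev]

lemma w_eq (g : ℕ) :
    (List.ofFn fun i : Fin g => ⁅(of (i, false) : FreeGroup (Fin g × Bool)), of (i, true)⁆).prod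
      = mk (Wword g) := by
  rw [Wword, ← prod_map_mk, map_ofFn]
  have : (fun i : Fin g => ⁅(of (i, false) : FreeGroup (Fin g × Bool)), of (i, true)⁆)
      = mk ∘ Cword g := by
    funext i
    simpa [Cword] using comm_mk (α := Fin g × Bool) (i, false) (i, true)
  rw [this]

lemma nonnil_blocks (g : ℕ) : ∀ l ∈ List.ofFn (Cword g), l ≠ [] := by
  intro l hl
  obtain ⟨i, rfl⟩ := List.mem_ofFn.1 hl
  simp [Cword]

lemma red'_blocks (g : ℕ) : ∀ l ∈ List.ofFn (Cword g), Red' l := by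
  intro l hl
  obtain ⟨i, rfl⟩ := List.mem_ofFn.1 hl
  simp [Cword, Red', Chain', List.isChain_cons_cons, Cancels]

lemma chain'_blocks (g : ℕ) : (List.ofFn (Cword g)).Chain' Junct := by
  show (List.ofFn (Cword g)).IsChain Junct
  rw [List.isChain_ofFn]
  intro i hi
  intro a ha b hb
  simp [Cword] at ha hb
  subst ha; subst hb
  rintro ⟨h1, -⟩
  have := congrArg Prod.snd h1
  simp at this

lemma red'_W (g : ℕ) : Red' (Wword g) :=
  (red'_flatten _ (nonnil_blocks g) (red'_blocks g) (chain'_blocks g)).1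

lemma junct_W (g : ℕ) : Junct (Wword g) (Wword g) := by
  obtain ⟨-, h2, h3⟩ := red'_flatten _ (nonnil_blocks g) (red'_blocks g) (chain'_blocks g)
  intro a ha b hb
  rw [Wword] at ha hb
  rw [h3] at ha
  rw [h2] at hb
  have ha' : a.1.2 = true := by
    rcases hL : (List.ofFn (Cword g)).getLast? with _ | l
    · rw [hL] at ha; simp at ha
    · rw [hL] at ha
      have hlmem : l ∈ List.ofFn (Cword g) := List.mem_of_mem_getLast? (by rw [hL]; rfl)
      obtain ⟨i, rfl⟩ := List.mem_ofFn.1 hlmem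
      have : a = ((i, true), false) := (by simpa [Cword] using ha : ((i, true), false) = a).symm
      rw [this]
  have hb' : b.1.2 = false := by
    rcases hL : (List.ofFn (Cword g)).head? with _ | l
    · rw [hL] at hb; simp at hb
    · rw [hL] at hb
      have hlmem : l ∈ List.ofFn (Cword g) := List.mem_of_mem_head? (by rw [hL]; rfl)
      obtain ⟨i, rfl⟩ := List.mem_ofFn.1 hlmem
      have : b = ((i, false), true) := (by simpa [Cword] using hb : ((i, false), true) = b).symm
      rw [this]
  rintro ⟨h1, -⟩
  rw [h1] at ha'
  rw [ha'] at hb'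
  simp at hb'

lemma cnt_append (x : α × Bool) (l l' : List (α × Bool)) :
    cnt x (l ++ l') = cnt x l + cnt x l' := by
  simp [cnt, List.count_append]

lemma cnt_flatten (x : α × Bool) (Ls : List (List (α × Bool))) :
    cnt x Ls.flatten = (Ls.map (cnt x)).sum := by
  induction Ls with
  | nil => rfl
  | cons l Ls ih =>
    rw [flatten_cons, cnt_append, ih, map_cons, sum_cons]

lemma count_W (g : ℕ) (hg : 1 ≤ g) :
    cnt ((⟨0, hg⟩, false), true) (Wword g) = 1 := by
  set z : Fin g := ⟨0, hg⟩
  rw [Wword, cnt_flatten, map_ofFn, List.sum_ofFn]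
  have hcnt : ∀ i : Fin g, (cnt ((z, false), true) ∘ Cword g) i
      = if i = z then 1 else 0 := by
    intro i
    by_cases h : i = z
    · subst h
      simp [Cword, cnt, List.count_cons, instBEqOfDecidableEq, Prod.ext_iff]
    · simp [Cword, cnt, List.count_cons, instBEqOfDecidableEq, Prod.ext_iff, h]
  simp only [hcnt]
  rw [Finset.sum_ite_eq' Finset.univ z (fun _ => 1)]
  simp

end SRRC

open SRRC FreeGroup in
/-- The cyclic subgroup generated by the surface relator
`w = [a₁,b₁]⋯[a_g,b_g]` is root-closed in the free group on the `2g`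
generators `a₁, b₁, …, a_g, b_g` (here indexed by `Fin g × Bool`, with
`(i, false)` playing the role of `aᵢ` and `(i, true)` the role of `bᵢ`). -/
theorem surface_relator_zpowers_rootClosed (g : ℕ) (hg : 1 ≤ g)
    (w : FreeGroup (Fin g × Bool))
    (hw : w = (List.ofFn fun i : Fin g =>
      ⁅FreeGroup.of (i, false), FreeGroup.of (i, true)⁆).prod)
    (s : FreeGroup (Fin g × Bool)) (k : ℤ) (hk : 1 ≤ k)
    (h : s ^ k ∈ Subgroup.zpowers w) :
    s ∈ Subgroup.zpowers w := by
  obtain ⟨n, hn⟩ := Subgroup.mem_zpowers_iff.1 h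
  have hwW : w = mk (Wword g) := by rw [hw]; exact w_eq g
  have hk' : s ^ k = s ^ (k.toNat) := by
    rw [← zpow_natCast, Int.toNat_of_nonneg (by omega)]
  have hk1 : 1 ≤ k.toNat := by omega
  rcases le_or_gt 0 n with hn0 | hn0
  · have hle : w ^ n = w ^ n.toNat := by rw [← zpow_natCast, Int.toNat_of_nonneg hn0]
    obtain ⟨c, hc⟩ := main_lemma (red'_W g) (junct_W g) (count_W g hg) s k.toNat n.toNat hk1
      (by rw [← hk', ← hn, hle, hwW])
    refine Subgroup.mem_zpowers_iff.2 ⟨(c : ℤ), ?_⟩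
    rw [zpow_natCast, hwW, ← hc]
  · have hneg : ((-n).toNat : ℤ) = -n := Int.toNat_of_nonneg (by omega)
    have key : (s⁻¹) ^ (k.toNat) = (mk (Wword g)) ^ ((-n).toNat) := by
      calc (s⁻¹) ^ (k.toNat) = (s ^ k.toNat)⁻¹ := inv_pow s k.toNat
        _ = (s ^ k)⁻¹ := by rw [← hk']
        _ = (w ^ n)⁻¹ := by rw [hn]
        _ = w ^ (-n) := (zpow_neg w n).symm
        _ = w ^ (((-n).toNat : ℤ)) := by rw [hneg]
        _ = w ^ ((-n).toNat) := zpow_natCast w _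
        _ = (mk (Wword g)) ^ ((-n).toNat) := by rw [hwW]
    obtain ⟨c, hc⟩ := main_lemma (red'_W g) (junct_W g) (count_W g hg) s⁻¹ k.toNat (-n).toNat
      hk1 key
    refine Subgroup.mem_zpowers_iff.2 ⟨-(c : ℤ), ?_⟩
    rw [zpow_neg, zpow_natCast, hwW, ← hc, inv_inv]
end

section
/- Let α be a type and a ∈ α. In the free group FreeGroup α, the cyclic subgroup generated by the basis element FreeGroup.of a is root-closed: for every s ∈ FreeGroup α and every integer k ≥ 1 such that s^k is an integer power of FreeGroup.of a, s itself is an integer power of FreeGroup.of a. -/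
set_option linter.unusedSectionVars false

namespace RootClosedAux

open FreeGroup List

variable {α : Type*} [DecidableEq α]

/-- A word is reduced if no adjacent pair cancels. -/
def Reduced (L : List (α × Bool)) : Prop :=
  List.Chain' (fun p q => ¬(p.1 = q.1 ∧ p.2 = !q.2)) L

theorem Reduced.reduce_eq {L : List (α × Bool)} (h : Reduced L) : reduce L = L := by
  induction L with
  | nil => rfl
  | cons x L ih =>
    have hL : Reduced L := h.tail
    rw [reduce.cons, ih hL]
    cases L with
    | nil => rfl
    | cons y t =>
      have : ¬(x.1 = y.1 ∧ x.2 = !y.2) := (List.isChain_cons_cons.1 h).1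
      simp [this]

theorem reduced_reduce (L : List (α × Bool)) : Reduced (reduce L) := by
  induction L with
  | nil => exact List.isChain_nil
  | cons x L ih =>
    rw [reduce.cons]
    rcases hr : reduce L with _ | ⟨y, t⟩
    · exact List.isChain_singleton _
    · rw [hr] at ih
      by_cases hc : x.1 = y.1 ∧ x.2 = !y.2
      · simp only [hc, if_true]
        exact ih.tail
      · simp only [hc, if_false]
        exact List.isChain_cons_cons.2 ⟨hc, ih⟩

theorem reduced_toWord (x : FreeGroup α) : Reduced x.toWord := by
  rw [← reduce_toWord]; exact reduced_reduce _

theorem toWord_mk_of_reduced {L : List (α × Bool)} (h : Reduced L) :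
    (FreeGroup.mk L).toWord = L := by
  rw [toWord_mk, h.reduce_eq]

theorem invRev_append (L₁ L₂ : List (α × Bool)) :
    invRev (L₁ ++ L₂) = invRev L₂ ++ invRev L₁ := by
  simp [invRev]

theorem invRev_singleton (p : α × Bool) : invRev [p] = [(p.1, !p.2)] := rfl

theorem invRev_replicate (n : ℕ) (p : α × Bool) :
    invRev (List.replicate n p) = List.replicate n (p.1, !p.2) := by
  simp [invRev, List.map_replicate, List.reverse_replicate]

theorem head?_invRev (L : List (α × Bool)) :
    (invRev L).head? = L.getLast?.map (fun p => (p.1, !p.2)) := by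
  simp [invRev, List.head?_reverse, List.getLast?_map]

/-- Cyclic reduction: every reduced word is `U ++ T ++ invRev U` with `T ++ T` reduced. -/
theorem exists_decomp : ∀ (n : ℕ) (L : List (α × Bool)), L.length ≤ n → Reduced L →
    ∃ U T : List (α × Bool), L = U ++ T ++ invRev U ∧ Reduced (T ++ T) := by
  intro n
  induction n with
  | zero =>
    intro L hL _
    rw [Nat.le_zero, List.length_eq_zero_iff] at hL
    exact ⟨[], [], by simp [hL, invRev], List.isChain_nil⟩
  | succ n ih =>
    intro L hL hred
    by_cases hT : Reduced (L ++ L)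
    · exact ⟨[], L, by simp [invRev], hT⟩
    · have hJ : ¬ ∀ x ∈ L.getLast?, ∀ y ∈ L.head?, ¬(x.1 = y.1 ∧ x.2 = !y.2) :=
        fun hj => hT (List.isChain_append.2 ⟨hred, hred, hj⟩)
      push_neg at hJ
      obtain ⟨x, hx, y, hy, hxy⟩ := hJ
      rcases L with _ | ⟨z, M⟩
      · simp at hy
      have hyz : z = y := by simpa using hy
      subst hyz
      rcases List.eq_nil_or_concat M with rfl | ⟨M', w, rfl⟩
      · have : z = x := by simpa using hx
        subst this
        simp at hxy
      · rw [List.concat_eq_append] at *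
        have hxw : w = x := by
          have : (z :: (M' ++ [w])).getLast? = some w := by
            rw [show z :: (M' ++ [w]) = (z :: M') ++ [w] from rfl, List.getLast?_concat]
          rw [this] at hx
          simpa using hx
        subst hxw
        have hwy : w = (z.1, !z.2) := Prod.ext hxy.1 hxy.2
        -- M' is reduced
        have hM' : Reduced M' := by
          have h1 : Reduced (M' ++ [w]) := hred.tail
          exact (List.isChain_append.1 h1).1
        obtain ⟨U', T, hdec, hTT⟩ := ih M' (by simp at hL ⊢; omega) hM'
        refine ⟨z :: U', T, ?_, hTT⟩
        have : invRev (z :: U') = invRev U' ++ [w] := by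
          rw [show z :: U' = [z] ++ U' from rfl, invRev_append, invRev_singleton, ← hwy]
        rw [this, hdec]
        simp
theorem head?_flatten_replicate {T : List (α × Bool)} (hT : T ≠ []) (k : ℕ) (hk : 1 ≤ k) :
    ((List.replicate k T).flatten).head? = T.head? := by
  obtain ⟨j, rfl⟩ : ∃ j, k = j + 1 := ⟨k - 1, by omega⟩
  rw [List.replicate_succ, List.flatten_cons, List.head?_append_of_ne_nil _ hT]

theorem getLast?_flatten_replicate {T : List (α × Bool)} (hT : T ≠ []) :
    ∀ (k : ℕ), 1 ≤ k → ((List.replicate k T).flatten).getLast? = T.getLast? := by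
  intro k
  induction k with
  | zero => omega
  | succ j ih =>
    intro _
    rw [List.replicate_succ, List.flatten_cons]
    rcases Nat.eq_zero_or_pos j with rfl | hj
    · simp
    · have hne : (List.replicate j T).flatten ≠ [] := by
        intro hnil
        have := head?_flatten_replicate hT j hj
        rw [hnil] at this
        simp only [List.head?_nil] at this
        exact hT (List.head?_eq_none_iff.1 this.symm)
      rw [List.getLast?_append_of_ne_nil _ hne, ih hj]

theorem reduced_flatten_replicate {T : List (α × Bool)} (hT : T ≠ [])
    (hTT : Reduced (T ++ T)) : ∀ k : ℕ, Reduced ((List.replicate k T).flatten) := by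
  intro k
  induction k with
  | zero => exact List.isChain_nil
  | succ j ih =>
    rw [List.replicate_succ, List.flatten_cons]
    obtain ⟨hT1, -, hj⟩ := List.isChain_append.1 hTT
    refine List.isChain_append.2 ⟨hT1, ih, ?_⟩
    intro x hx y hy
    rcases Nat.eq_zero_or_pos j with rfl | hjpos
    · simp at hy
    · rw [head?_flatten_replicate hT j hjpos] at hy
      exact hj x hx y hy

theorem reduced_toWord' (x : FreeGroup α) : Reduced x.toWord := by
  rw [← FreeGroup.reduce_toWord]; exact reduced_reduce _

theorem conj_pow_aux {G : Type*} [Group G] (u t : G) (n : ℕ) :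
    (u * t * u⁻¹) ^ n = u * t ^ n * u⁻¹ := by
  induction n with
  | zero => simp
  | succ n ih => rw [pow_succ, pow_succ, ih]; group

theorem pow_of_replicate (a : α) (t : ℕ) :
    (FreeGroup.of a : FreeGroup α) ^ t = FreeGroup.mk (List.replicate t (a, true)) := by
  rw [FreeGroup.of, FreeGroup.pow_mk]
  congr 1
  induction t with
  | zero => simp
  | succ t ih => rw [List.replicate_succ, List.flatten_cons, ih, List.replicate_succ]; rfl

end RootClosedAux

open RootClosedAux FreeGroup

/-- The cyclic subgroup generated by a basis element `FreeGroup.of a` is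
root-closed in the free group `FreeGroup α`: if `s ^ k` is an integer power
of `FreeGroup.of a` for some integer `k ≥ 1`, then so is `s`. -/
theorem zpowers_of_basis_rootClosed {α : Type*} (a : α)
    (s : FreeGroup α) (k : ℤ) (hk : 1 ≤ k)
    (h : ∃ m : ℤ, s ^ k = (FreeGroup.of a) ^ m) :
    ∃ m : ℤ, s = (FreeGroup.of a) ^ m := by
  classical
  obtain ⟨m, hm⟩ := h
  obtain ⟨n, rfl⟩ : ∃ n : ℕ, k = (n : ℤ) := ⟨k.toNat, (Int.toNat_of_nonneg (by omega)).symm⟩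
  have hn1 : 1 ≤ n := by exact_mod_cast hk
  rw [zpow_natCast] at hm
  -- the right-hand side is a replicate word
  obtain ⟨N, c, hR⟩ : ∃ (N : ℕ) (c : Bool),
      ((FreeGroup.of a : FreeGroup α) ^ m).toWord = List.replicate N (a, c) := by
    rcases le_or_gt 0 m with h0 | h0
    · lift m to ℕ using h0
      exact ⟨m, true, by rw [zpow_natCast, FreeGroup.toWord_of_pow]⟩
    · refine ⟨(-m).toNat, false, ?_⟩
      have hmm : (FreeGroup.of a : FreeGroup α) ^ m = ((FreeGroup.of a) ^ (-m).toNat)⁻¹ := by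
        rw [← zpow_natCast, Int.toNat_of_nonneg (by omega : (0:ℤ) ≤ -m), ← zpow_neg, neg_neg]
      rw [hmm, FreeGroup.toWord_inv, FreeGroup.toWord_of_pow, invRev_replicate]
      norm_num
  obtain ⟨U, T, hdec, hTT⟩ := exists_decomp s.toWord.length s.toWord le_rfl (reduced_toWord' s)
  have hred : Reduced (U ++ T ++ invRev U) := hdec ▸ reduced_toWord' s
  have hs : s = FreeGroup.mk (U ++ T ++ invRev U) := by
    rw [← hdec, FreeGroup.mk_toWord]
  rcases eq_or_ne T [] with rfl | hTne
  · -- then U must be empty and s = 1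
    have hU : U = [] := by
      rcases List.eq_nil_or_concat U with rfl | ⟨U', u, rfl⟩
      · rfl
      · exfalso
        rw [List.concat_eq_append] at hred
        have hred' : Reduced ((U' ++ [u]) ++ invRev (U' ++ [u])) := by
          simpa using hred
        obtain ⟨-, -, hj⟩ := List.isChain_append.1 hred'
        have h1 : u ∈ (U' ++ [u]).getLast? := by rw [List.getLast?_concat]; rfl
        have h2 : (u.1, !u.2) ∈ (invRev (U' ++ [u])).head? := by
          rw [head?_invRev, List.getLast?_concat]; rfl
        exact hj u h1 _ h2 ⟨rfl, by simp⟩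
    subst hU
    exact ⟨0, by simp [invRev] at hs; rw [hs, zpow_zero]; rfl⟩
  · -- main case
    set W : List (α × Bool) := (List.replicate n T).flatten with hW
    have hWred : Reduced (U ++ W ++ invRev U) := by
      obtain ⟨hUT, hIU, hj2⟩ := List.isChain_append.1 hred
      obtain ⟨hU, hT, hj1⟩ := List.isChain_append.1 hUT
      refine List.isChain_append.2 ⟨List.isChain_append.2
        ⟨hU, reduced_flatten_replicate hTne hTT n, ?_⟩, hIU, ?_⟩
      · intro x hx y hy
        rw [head?_flatten_replicate hTne n hn1] at hy
        exact hj1 x hx y hy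
      · intro x hx y hy
        rw [List.getLast?_append_of_ne_nil] at hx
        · rw [getLast?_flatten_replicate hTne n hn1] at hx
          refine hj2 x ?_ y hy
          rw [List.getLast?_append_of_ne_nil _ hTne]
          exact hx
        · intro hnil
          have := head?_flatten_replicate hTne n hn1
          rw [← hW, hnil] at this
          exact hTne (List.head?_eq_none_iff.1 this.symm)
    have hpow : (s ^ n).toWord = U ++ W ++ invRev U := by
      have : s ^ n = FreeGroup.mk (U ++ W ++ invRev U) := by
        rw [hs]
        rw [← FreeGroup.mul_mk, ← FreeGroup.mul_mk, ← FreeGroup.inv_mk,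
          conj_pow_aux, FreeGroup.pow_mk, ← hW,
          ← FreeGroup.mul_mk, ← FreeGroup.mul_mk, ← FreeGroup.inv_mk]
      rw [this, FreeGroup.toWord_mk, hWred.reduce_eq]
    have hkey : U ++ W ++ invRev U = List.replicate N (a, c) := by
      rw [← hpow, hm, hR]
    -- U must be empty
    have hU : U = [] := by
      rcases List.eq_nil_or_concat U with rfl | ⟨U', u, rfl⟩
      · rfl
      · exfalso
        rw [List.concat_eq_append] at hkey
        have hu1 : u ∈ U' ++ [u] := by simp
        have humem : (u : α × Bool) = (a, c) := by
          refine List.eq_of_mem_replicate (n := N) ?_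
          rw [← hkey]; simp
        have huinv : ((u.1, !u.2) : α × Bool) = (a, c) := by
          refine List.eq_of_mem_replicate (n := N) ?_
          rw [← hkey]
          have : ((u.1, !u.2) : α × Bool) ∈ invRev (U' ++ [u]) := by
            simp [FreeGroup.invRev]
          simp only [List.mem_append]
          exact Or.inr this
        rw [humem] at huinv
        simp at huinv
    subst hU
    simp only [List.nil_append, FreeGroup.invRev_empty, List.append_nil] at hkey hs
    -- T is a prefix of W, so T is a replicate
    have hTmem : ∀ p ∈ T, p = (a, c) := by
      intro p hp
      refine List.eq_of_mem_replicate (n := N) ?_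
      rw [← hkey, hW]
      obtain ⟨j, rfl⟩ : ∃ j, n = j + 1 := ⟨n - 1, by omega⟩
      rw [List.replicate_succ, List.flatten_cons]
      exact List.mem_append.2 (Or.inl hp)
    have hTrep : T = List.replicate T.length (a, c) := List.eq_replicate_of_mem hTmem
    rw [hTrep] at hs
    cases c with
    | true => exact ⟨T.length, by rw [zpow_natCast, pow_of_replicate, hs]⟩
    | false =>
      refine ⟨-(T.length : ℤ), ?_⟩
      rw [zpow_neg, zpow_natCast, pow_of_replicate, hs, FreeGroup.inv_mk, invRev_replicate]
      norm_num
end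

section
/- In a free group FreeGroup α, if a^k = s^r for some integers k ≥ 1 and r ≥ 1, then a and s are powers of a common element: there exists c ∈ FreeGroup α and integers p, q with a = c^p and s = c^q (equivalently, a and s commute). -/
/-- Pure integer arithmetic at the heart of the rank argument. -/
private lemma int_arith {k r u1 u2 v1 v2 m n m' n' : ℤ} (hk : 1 ≤ k) (hr : 1 ≤ r)
    (h1 : k * u1 = r * v1) (h2 : k * u2 = r * v2)
    (e1 : m * u1 + n * v1 = 1) (e2 : m * u2 + n * v2 = 0)
    (e3 : m' * u1 + n' * v1 = 0) (e4 : m' * u2 + n' * v2 = 1) : False := by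
  have A1 : (m * r + n * k) * u1 = r := by linear_combination r * e1 + n * h1
  have A2 : (m * r + n * k) * u2 = 0 := by linear_combination r * e2 + n * h2
  have B1 : (m' * r + n' * k) * u1 = 0 := by linear_combination r * e3 + n' * h1
  have B2 : (m' * r + n' * k) * u2 = r := by linear_combination r * e4 + n' * h2
  have : r * r = 0 := by
    calc r * r = ((m * r + n * k) * u1) * ((m' * r + n' * k) * u2) := by rw [A1, B2]
    _ = ((m * r + n * k) * u2) * ((m' * r + n' * k) * u1) := by ring
    _ = 0 := by rw [A2, B1]; ring
  nlinarith

/-- If two elements generate a free group and satisfy a power relation, the index type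
is a subsingleton. -/
private lemma subsingleton_of_rel {ι : Type*} {u v : FreeGroup ι} {k r : ℤ}
    (hk : 1 ≤ k) (hr : 1 ≤ r) (h : u ^ k = v ^ r)
    (htop : Subgroup.closure ({u, v} : Set (FreeGroup ι)) = ⊤) : Subsingleton ι := by
  by_contra hs
  rw [not_subsingleton_iff_nontrivial] at hs
  obtain ⟨b1, b2, hne⟩ := hs
  classical
  -- abelianization-style homomorphism to `Multiplicative (ℤ × ℤ)`
  set Φ : FreeGroup ι →* Multiplicative (ℤ × ℤ) :=
    FreeGroup.lift (fun i =>
      Multiplicative.ofAdd (if i = b1 then ((1 : ℤ), (0 : ℤ)) else if i = b2 then (0, 1) else 0))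
    with hΦ
  have key : ∀ x : FreeGroup ι, ∃ m n : ℤ, (Φ u) ^ m * (Φ v) ^ n = Φ x := by
    intro x
    have hx : Φ x ∈ Subgroup.closure ({Φ u, Φ v} : Set (Multiplicative (ℤ × ℤ))) := by
      have : Φ x ∈ (Subgroup.closure ({u, v} : Set (FreeGroup ι))).map Φ := by
        exact ⟨x, by rw [htop]; trivial, rfl⟩
      rwa [MonoidHom.map_closure, Set.image_pair] at this
    exact Subgroup.mem_closure_pair.mp hx
  obtain ⟨m, n, hmn⟩ := key (FreeGroup.of b1)
  obtain ⟨m', n', hmn'⟩ := key (FreeGroup.of b2)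
  have hofb1 : (Φ (FreeGroup.of b1)).toAdd = ((1 : ℤ), (0 : ℤ)) := by
    simp [hΦ]
  have hofb2 : (Φ (FreeGroup.of b2)).toAdd = ((0 : ℤ), (1 : ℤ)) := by
    simp [hΦ, hne.symm]
  set U := (Φ u).toAdd with hU
  set V := (Φ v).toAdd with hV
  have hrel : k • U = r • V := by
    have := congrArg (fun x => (Φ x).toAdd) h
    simpa only [map_zpow, toAdd_zpow] using this
  have E1 : m • U + n • V = ((1 : ℤ), (0 : ℤ)) := by
    have := congrArg Multiplicative.toAdd hmn
    simpa only [toAdd_mul, toAdd_zpow, hofb1] using this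
  have E2 : m' • U + n' • V = ((0 : ℤ), (1 : ℤ)) := by
    have := congrArg Multiplicative.toAdd hmn'
    simpa only [toAdd_mul, toAdd_zpow, hofb2] using this
  have h1 : k * U.1 = r * V.1 := by
    have := congrArg Prod.fst hrel; simpa [smul_eq_mul] using this
  have h2 : k * U.2 = r * V.2 := by
    have := congrArg Prod.snd hrel; simpa [smul_eq_mul] using this
  have e1 : m * U.1 + n * V.1 = 1 := by
    have := congrArg Prod.fst E1; simpa [smul_eq_mul] using this
  have e2 : m * U.2 + n * V.2 = 0 := by
    have := congrArg Prod.snd E1; simpa [smul_eq_mul] using this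
  have e3 : m' * U.1 + n' * V.1 = 0 := by
    have := congrArg Prod.fst E2; simpa [smul_eq_mul] using this
  have e4 : m' * U.2 + n' * V.2 = 1 := by
    have := congrArg Prod.snd E2; simpa [smul_eq_mul] using this
  exact int_arith hk hr h1 h2 e1 e2 e3 e4

/-- A free group on a subsingleton type is generated by a single element. -/
private lemma exists_gen (ι : Type*) [Subsingleton ι] :
    ∃ c : FreeGroup ι, ∀ x : FreeGroup ι, ∃ n : ℤ, x = c ^ n := by
  classical
  by_cases hι : Nonempty ι
  · obtain ⟨i0⟩ := hι
    refine ⟨FreeGroup.of i0, fun x => ?_⟩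
    induction x using FreeGroup.induction_on with
    | C1 => exact ⟨0, by simp⟩
    | of i => exact ⟨1, by rw [zpow_one, Subsingleton.elim i i0]⟩
    | inv_of i ih =>
        obtain ⟨n, hn⟩ := ih
        exact ⟨-n, by rw [hn]; exact (zpow_neg _ _).symm⟩
    | mul x y ihx ihy =>
        obtain ⟨n, hn⟩ := ihx; obtain ⟨m, hm⟩ := ihy
        exact ⟨n + m, by rw [hn, hm, zpow_add]⟩
  · refine ⟨1, fun x => ⟨0, ?_⟩⟩
    induction x using FreeGroup.induction_on with
    | C1 => simp
    | of i => exact absurd ⟨i⟩ hι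
    | inv_of i ih => rw [ih]; simp
    | mul x y ihx ihy => rw [ihx, ihy]; simp

/-- In a free group, if `a ^ k = s ^ r` for some integers `k, r ≥ 1`, then
`a` and `s` are powers of a common element. -/
theorem freeGroup_powers_of_common_element {α : Type*}
    (a s : FreeGroup α) (k r : ℤ) (hk : 1 ≤ k) (hr : 1 ≤ r)
    (h : a ^ k = s ^ r) :
    ∃ (c : FreeGroup α) (p q : ℤ), a = c ^ p ∧ s = c ^ q := by
  set H := Subgroup.closure ({a, s} : Set (FreeGroup α)) with hH
  have haH : a ∈ H := Subgroup.subset_closure (by simp)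
  have hsH : s ∈ H := Subgroup.subset_closure (by simp)
  set aH : H := ⟨a, haH⟩
  set sH : H := ⟨s, hsH⟩
  -- closure of {aH, sH} in H is ⊤
  have htopH : Subgroup.closure ({aH, sH} : Set H) = ⊤ := by
    have := Subgroup.closure_closure_coe_preimage (k := ({a, s} : Set (FreeGroup α)))
    rw [← this]
    congr 1
    ext x
    constructor
    · rintro (rfl | rfl) <;> simp [aH, sH]
    · intro hx
      rcases hx with hx | hx
      · left; exact Subtype.ext hx
      · right; exact Subtype.ext hx
  -- H is a free group (Nielsen–Schreier)
  obtain ⟨ι, ⟨b⟩⟩ := (subgroupIsFreeOfIsFree H).nonempty_basis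
  set e : H ≃* FreeGroup ι := b.repr
  have hrel : (e aH) ^ k = (e sH) ^ r := by
    rw [← map_zpow, ← map_zpow]
    congr 1
    exact Subtype.ext h
  have htop' : Subgroup.closure ({e aH, e sH} : Set (FreeGroup ι)) = ⊤ := by
    have : (Subgroup.closure ({aH, sH} : Set H)).map e.toMonoidHom = ⊤ := by
      rw [htopH]
      exact Subgroup.map_top_of_surjective _ e.surjective
    rwa [MonoidHom.map_closure, Set.image_pair] at this
  have : Subsingleton ι := subsingleton_of_rel hk hr hrel htop'
  obtain ⟨c0, hc0⟩ := exists_gen ι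
  obtain ⟨p, hp⟩ := hc0 (e aH)
  obtain ⟨q, hq⟩ := hc0 (e sH)
  refine ⟨(e.symm c0 : H), p, q, ?_, ?_⟩
  · have : aH = (e.symm c0) ^ p := by
      apply e.injective
      rw [map_zpow, MulEquiv.apply_symm_apply, ← hp]
    calc a = (aH : FreeGroup α) := rfl
    _ = (((e.symm c0) ^ p : H) : FreeGroup α) := by rw [← this]
    _ = ((e.symm c0 : H) : FreeGroup α) ^ p := by rw [SubgroupClass.coe_zpow]
  · have : sH = (e.symm c0) ^ q := by
      apply e.injective
      rw [map_zpow, MulEquiv.apply_symm_apply, ← hq]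
    calc s = (sH : FreeGroup α) := rfl
    _ = (((e.symm c0) ^ q : H) : FreeGroup α) := by rw [← this]
    _ = ((e.symm c0 : H) : FreeGroup α) ^ q := by rw [SubgroupClass.coe_zpow]
end
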